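/- Let u : ℝ^2 → ℝ be weakly differentiable with gradient in L^p, p ≥ 2, and define u*(y,x_2) = (u(y,x_2) + u(-y,x_2))/2. Then ∫_{ℝ^2} |Du*|^p dx ≤ ∫_{ℝ^2} |Du|^p dx − ∫_{ℝ^2} |D_{S^0} u|^p dx, where D_{S^0}u(y,x_2) = (∂_y u(y,x_2) + ∂_y u(-y,x_2))/2. -/

import Mathlib

open MeasureTheory InnerProductSpace

local notation "E2" => EuclideanSpace ℝ (Fin 2)

/-- Reflection of the plane in the first coordinate: `(y, x₂) ↦ (-y, x₂)`. -/
noncomputable def reflFirst : EuclideanSpace ℝ (Fin 2) → EuclideanSpace ℝ (Fin 2) :=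
  fun x => x - (2 * x 0) • EuclideanSpace.single (0 : Fin 2) (1 : ℝ)

noncomputable def v0 : E2 := EuclideanSpace.single (0 : Fin 2) (1 : ℝ)

noncomputable def reflE : E2 ≃ₗᵢ[ℝ] E2 :=
  (Submodule.reflection (ℝ ∙ v0)).trans (LinearIsometryEquiv.neg ℝ)

lemma inner_v0 (x : E2) : ⟪v0, x⟫_ℝ = x 0 := by
  simp [v0, EuclideanSpace.inner_single_left]

lemma norm_v0 : ‖v0‖ = 1 := by simp [v0]

lemma reflE_apply (x : E2) : reflE x = reflFirst x := by
  have hproj : ((ℝ ∙ v0).starProjection x : E2) = (x 0) • v0 := by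
    rw [Submodule.starProjection_singleton]
    rw [inner_v0, norm_v0]
    norm_num
  simp only [reflE, LinearIsometryEquiv.trans_apply, LinearIsometryEquiv.coe_neg,
    Submodule.reflection_apply, hproj, reflFirst]
  rw [v0]
  ext i
  simp [two_smul]
  split <;> ring

lemma reflE_involutive (x : E2) : reflE (reflE x) = x := by
  simp only [reflE, LinearIsometryEquiv.trans_apply, LinearIsometryEquiv.coe_neg, map_neg,
    neg_neg, Submodule.reflection_reflection, LinearIsometryEquiv.coe_neg]

lemma real_add_rpow_le {x y q : ℝ} (hx : 0 ≤ x) (hy : 0 ≤ y) (hq : 1 ≤ q) :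
    x ^ q + y ^ q ≤ (x + y) ^ q := by
  have h := NNReal.add_rpow_le_rpow_add x.toNNReal y.toNNReal hq
  rw [← Real.toNNReal_add hx hy] at h
  have h2 := (NNReal.coe_le_coe).2 h
  simpa [NNReal.coe_rpow, Real.coe_toNNReal _ hx, Real.coe_toNNReal _ hy,
    Real.coe_toNNReal _ (add_nonneg hx hy)] using h2

lemma real_avg_rpow_le {x y q : ℝ} (hx : 0 ≤ x) (hy : 0 ≤ y) (hq : 1 ≤ q) :
    ((x + y) / 2) ^ q ≤ (x ^ q + y ^ q) / 2 := by
  have h := Real.rpow_arith_mean_le_arith_mean_rpow (Finset.univ : Finset (Fin 2))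
    ![1/2, 1/2] ![x, y] (by intro i _; fin_cases i <;> norm_num)
    (by simp [Fin.sum_univ_succ]; norm_num) (by intro i _; fin_cases i <;> simpa) hq
  simp only [Fin.sum_univ_succ, Fin.sum_univ_zero] at h
  calc ((x + y) / 2) ^ q = (1/2 * x + 1/2 * y) ^ q := by ring_nf
    _ ≤ 1/2 * x ^ q + 1/2 * y ^ q := by simpa using h
    _ = (x ^ q + y ^ q) / 2 := by ring

lemma clarkson_scalar {s t x y p : ℝ} (hs : 0 ≤ s) (ht : 0 ≤ t) (hx : 0 ≤ x) (hy : 0 ≤ y)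
    (hp : 2 ≤ p) (h : s ^ 2 + t ^ 2 = (x ^ 2 + y ^ 2) / 2) :
    s ^ p + t ^ p ≤ (x ^ p + y ^ p) / 2 := by
  set q := p / 2 with hqdef
  have hq : 1 ≤ q := by rw [hqdef]; linarith
  have e1 : ∀ r : ℝ, 0 ≤ r → r ^ p = (r ^ 2) ^ q := by
    intro r hr
    rw [← Real.rpow_natCast r 2, ← Real.rpow_mul hr]
    rw [hqdef]; congr 1; push_cast; ring
  calc s ^ p + t ^ p = (s ^ 2) ^ q + (t ^ 2) ^ q := by rw [e1 s hs, e1 t ht]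
    _ ≤ (s ^ 2 + t ^ 2) ^ q := real_add_rpow_le (sq_nonneg s) (sq_nonneg t) hq
    _ = ((x ^ 2 + y ^ 2) / 2) ^ q := by rw [h]
    _ ≤ ((x ^ 2) ^ q + (y ^ 2) ^ q) / 2 := real_avg_rpow_le (sq_nonneg x) (sq_nonneg y) hq
    _ = (x ^ p + y ^ p) / 2 := by rw [e1 x hx, e1 y hy]

lemma toDual_reflE (g : E2) :
    (toDual ℝ E2) (reflE g) =
      ((toDual ℝ E2) g).comp (reflE.toContinuousLinearEquiv : E2 →L[ℝ] E2) := by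
  ext v
  simp only [toDual_apply_apply, ContinuousLinearMap.comp_apply,
    ContinuousLinearEquiv.coe_coe, LinearIsometryEquiv.coe_toContinuousLinearEquiv]
  calc ⟪reflE g, v⟫_ℝ = ⟪reflE g, reflE (reflE v)⟫_ℝ := by rw [reflE_involutive]
    _ = ⟪g, reflE v⟫_ℝ := reflE.inner_map_map g (reflE v)

lemma hasGradientAt_comp_reflE (u : E2 → ℝ) (hu : Differentiable ℝ u) (x : E2) :
    HasGradientAt (fun y => u (reflE y)) (reflE (gradient u (reflE x))) x := by
  have h1 : HasFDerivAt u ((toDual ℝ E2) (gradient u (reflE x))) (reflE x) :=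
    (hu (reflE x)).hasGradientAt.hasFDerivAt
  have he : HasFDerivAt (fun y : E2 => reflE y)
      (reflE.toContinuousLinearEquiv : E2 →L[ℝ] E2) x := by
    simpa using (reflE.toContinuousLinearEquiv : E2 →L[ℝ] E2).hasFDerivAt
  have h2 := h1.comp x he
  rw [hasGradientAt_iff_hasFDerivAt, toDual_reflE]
  exact h2

lemma gradient_ustar_eq (u : E2 → ℝ) (hu : Differentiable ℝ u)
    (ustar : E2 → ℝ) (hustar : ∀ x, ustar x = (u x + u (reflE x)) / 2) (x : E2) :
    gradient ustar x = (2⁻¹ : ℝ) • (gradient u x + reflE (gradient u (reflE x))) := by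
  have h1 : HasGradientAt u (gradient u x) x := (hu x).hasGradientAt
  have h2 := hasGradientAt_comp_reflE u hu x
  have h3 : HasFDerivAt (fun y => (2⁻¹ : ℝ) • (u y + u (reflE y)))
      ((2⁻¹ : ℝ) • ((toDual ℝ E2) (gradient u x) +
        (toDual ℝ E2) (reflE (gradient u (reflE x))))) x :=
    (h1.hasFDerivAt.add h2.hasFDerivAt).const_smul (2⁻¹ : ℝ)
  have h4 : HasFDerivAt ustar ((toDual ℝ E2)
      ((2⁻¹ : ℝ) • (gradient u x + reflE (gradient u (reflE x))))) x := by
    have : ustar = fun y => (2⁻¹ : ℝ) • (u y + u (reflE y)) := by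
      funext y; rw [hustar y]; simp [smul_eq_mul]; ring
    rw [this, _root_.map_smul, map_add]
    exact h3
  have := h4.hasGradientAt.gradient
  rwa [LinearIsometryEquiv.symm_apply_apply] at this

lemma measurable_gradient (u : E2 → ℝ) : Measurable (gradient u) := by
  have h : Measurable (fderiv ℝ u) := measurable_fderiv ℝ u
  exact ((toDual ℝ E2).symm.continuous.measurable).comp h

lemma pointwise_key (p : ℝ) (hp : 2 ≤ p) (u : E2 → ℝ) (hu : Differentiable ℝ u)
    (ustar : E2 → ℝ) (hustar : ∀ x, ustar x = (u x + u (reflE x)) / 2)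
    (DS : E2 → ℝ) (hDS : ∀ x, DS x = (gradient u x 0 + gradient u (reflE x) 0) / 2) (x : E2) :
    ‖gradient ustar x‖ ^ p + |DS x| ^ p ≤
      (‖gradient u x‖ ^ p + ‖gradient u (reflE x)‖ ^ p) / 2 := by
  set a := gradient u x with ha
  set b := gradient u (reflE x) with hb
  set B := reflE b with hB
  have hp0 : 0 ≤ p := by linarith
  have hnormA : ‖gradient ustar x‖ = ‖a + B‖ / 2 := by
    rw [gradient_ustar_eq u hu ustar hustar x, norm_smul]
    simp [div_eq_inv_mul]
    rfl
  have hB0 : ⟪v0, B⟫_ℝ = -(b 0) := by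
    rw [hB, reflE_apply, reflFirst]
    rw [inner_sub_right, real_inner_smul_right, inner_v0]
    have : ⟪v0, EuclideanSpace.single (0 : Fin 2) (1 : ℝ)⟫_ℝ = 1 := by
      rw [← v0, real_inner_self_eq_norm_sq, norm_v0]; norm_num
    rw [this]; ring
  have hDSbound : |DS x| ≤ ‖a - B‖ / 2 := by
    have hval : a 0 + b 0 = ⟪v0, a - B⟫_ℝ := by
      rw [inner_sub_right, hB0, inner_v0]; ring
    rw [hDS x, ← ha, ← hb]
    rw [abs_div]
    have h1 : |a 0 + b 0| ≤ ‖a - B‖ := by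
      rw [hval]
      calc |⟪v0, a - B⟫_ℝ| ≤ ‖v0‖ * ‖a - B‖ := abs_real_inner_le_norm v0 (a - B)
        _ = ‖a - B‖ := by rw [norm_v0]; ring
    have : |(2:ℝ)| = 2 := by norm_num
    rw [this]
    exact div_le_div_of_nonneg_right h1 (by norm_num) |>.trans_eq rfl
  have hpar : (‖a + B‖ / 2) ^ 2 + (‖a - B‖ / 2) ^ 2 = (‖a‖ ^ 2 + ‖b‖ ^ 2) / 2 := by
    have h := parallelogram_law_with_norm ℝ a B
    have hBb : ‖B‖ = ‖b‖ := reflE.norm_map b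
    rw [hBb] at h
    field_simp
    linarith
  have hclark := clarkson_scalar (by positivity) (by positivity) (norm_nonneg a)
    (norm_nonneg b) hp hpar
  have hDSp : |DS x| ^ p ≤ (‖a - B‖ / 2) ^ p :=
    Real.rpow_le_rpow (abs_nonneg _) hDSbound hp0
  rw [hnormA]
  linarith

/-- Pólya–Szegő type inequality for the axial average in the plane: with
`u*(y,x₂) = (u(y,x₂) + u(-y,x₂))/2` and
`D_{S⁰}u(y,x₂) = (∂_y u(y,x₂) + ∂_y u(-y,x₂))/2`, one has
`∫ |Du*|^p ≤ ∫ |Du|^p - ∫ |D_{S⁰}u|^p`. -/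
theorem axial_average_polya_szego (p : ℝ) (hp : 2 ≤ p)
    (u : EuclideanSpace ℝ (Fin 2) → ℝ) (hu : Differentiable ℝ u)
    (hLp : MemLp (fun x => ‖gradient u x‖) (ENNReal.ofReal p) volume)
    (ustar : EuclideanSpace ℝ (Fin 2) → ℝ)
    (hustar : ∀ x, ustar x = (u x + u (reflFirst x)) / 2)
    (DS : EuclideanSpace ℝ (Fin 2) → ℝ)
    (hDS : ∀ x, DS x = (gradient u x 0 + gradient u (reflFirst x) 0) / 2) :
    (∫ x, ‖gradient ustar x‖ ^ p) ≤
      (∫ x, ‖gradient u x‖ ^ p) - ∫ x, |DS x| ^ p := by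
  simp only [← reflE_apply] at hustar hDS
  have hp0 : (0:ℝ) < p := by linarith
  set f : E2 → ℝ := fun x => ‖gradient u x‖ ^ p with hf
  set G : E2 → ℝ := fun x => ‖gradient ustar x‖ ^ p with hG
  set H : E2 → ℝ := fun x => |DS x| ^ p with hH
  -- integrability of f
  have hfi : Integrable f := by
    have h0 : ENNReal.ofReal p ≠ 0 := (ENNReal.ofReal_pos.2 hp0).ne'
    have htop : ENNReal.ofReal p ≠ ⊤ := ENNReal.ofReal_ne_top
    have := hLp.integrable_norm_rpow h0 htop
    simpa [hf, ENNReal.toReal_ofReal hp0.le] using this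
  -- measure preserving reflection
  have mp : MeasurePreserving (⇑reflE) (volume : Measure E2) volume :=
    reflE.measurePreserving
  have me : MeasurableEmbedding (⇑reflE) := reflE.toHomeomorph.measurableEmbedding
  have hfei : Integrable (fun x => f (reflE x)) := (mp.integrable_comp_emb me).mpr hfi
  have hfeint : (∫ x, f (reflE x)) = ∫ x, f x := mp.integral_comp me f
  -- bound function
  set bound : E2 → ℝ := fun x => (f x + f (reflE x)) / 2 with hbound
  have hboundi : Integrable bound := (hfi.add hfei).div_const 2
  -- pointwise bound
  have key : ∀ x, G x + H x ≤ bound x := fun x =>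
    pointwise_key p hp u hu ustar hustar DS hDS x
  have hGnn : ∀ x, 0 ≤ G x := fun x => Real.rpow_nonneg (norm_nonneg _) p
  have hHnn : ∀ x, 0 ≤ H x := fun x => Real.rpow_nonneg (abs_nonneg _) p
  -- measurability
  have mgu : Measurable (gradient u) := measurable_gradient u
  have mGgrad : Measurable (gradient ustar) := by
    have : gradient ustar = fun x =>
        (2⁻¹ : ℝ) • (gradient u x + reflE (gradient u (reflE x))) := by
      funext x; exact gradient_ustar_eq u hu ustar hustar x
    rw [this]
    exact ((mgu.add ((reflE.continuous.measurable.comp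
      (mgu.comp reflE.continuous.measurable)))).const_smul (2⁻¹ : ℝ))
  have mG : Measurable G := (mGgrad.norm).pow_const p
  have mH : Measurable H := by
    have h0 : Measurable fun x => gradient u x 0 := by
      have : (fun x => gradient u x 0) = fun x => ⟪v0, gradient u x⟫_ℝ := by
        funext x; rw [inner_v0]
      rw [this]
      exact (Continuous.measurable (continuous_const.inner continuous_id)).comp mgu
    have h1 : Measurable fun x => gradient u (reflE x) 0 :=
      h0.comp reflE.continuous.measurable
    have hDSm : Measurable DS := by
      have : DS = fun x => (gradient u x 0 + gradient u (reflE x) 0) / 2 := funext hDS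
      rw [this]
      exact (h0.add h1).div_const 2
    exact (hDSm.abs).pow_const p
  -- integrability of G and H
  have hGi : Integrable G := by
    refine Integrable.mono' hboundi mG.aestronglyMeasurable (Filter.Eventually.of_forall ?_)
    intro x
    rw [Real.norm_of_nonneg (hGnn x)]
    have := key x
    have := hHnn x
    linarith
  have hHi : Integrable H := by
    refine Integrable.mono' hboundi mH.aestronglyMeasurable (Filter.Eventually.of_forall ?_)
    intro x
    rw [Real.norm_of_nonneg (hHnn x)]
    have := key x
    have := hGnn x
    linarith
  -- integrate
  have hsum : (∫ x, G x) + ∫ x, H x = ∫ x, (G x + H x) := (integral_add hGi hHi).symm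
  have hmono : (∫ x, (G x + H x)) ≤ ∫ x, bound x :=
    integral_mono (hGi.add hHi) hboundi key
  have hboundint : (∫ x, bound x) = ∫ x, f x := by
    rw [hbound]
    simp only [integral_div]
    rw [integral_add hfi hfei, hfeint]
    ring
  have : (∫ x, G x) + ∫ x, H x ≤ ∫ x, f x := by
    rw [hsum, ← hboundint]; exact hmono
  have hGoal : (∫ x, G x) ≤ (∫ x, f x) - ∫ x, H x := by linarith
  exact hGoal
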